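/- arXiv:2203.10598 — 6 statements merged into one kernel-verified Lean document; each statement's English description precedes it below -/
import Mathlib

section
/- For every α ∈ [0,1], every τ > 0, every λ > 0 and every real t > τ, one has (t−τ)^α · λ^α · (1+τλ)^{−t/τ} ≤ 1. -/
/-- Per-eigenvalue uniform smoothing estimate: for `α ∈ [0,1]`, `τ > 0`, `λ > 0`, `t > τ`,
`(t−τ)^α · λ^α · (1+τλ)^{−t/τ} ≤ 1`. -/
theorem smoothing_per_eigenvalue (α τ lam t : ℝ) (hα : α ∈ Set.Icc (0:ℝ) 1)
    (hτ : 0 < τ) (hlam : 0 < lam) (ht : τ < t) :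
    (t - τ) ^ α * lam ^ α * (1 + τ * lam) ^ (-(t / τ)) ≤ 1 := by
  obtain ⟨hα0, hα1⟩ := hα
  have hts : (0:ℝ) < t - τ := by linarith
  have hx : (0:ℝ) < τ * lam := mul_pos hτ hlam
  have hb : (1:ℝ) < 1 + τ * lam := by linarith
  have hp : (1:ℝ) ≤ t / τ := (one_le_div hτ).mpr ht.le
  -- Bernoulli
  have hbern : 1 + (t / τ) * (τ * lam) ≤ (1 + τ * lam) ^ (t / τ) :=
    one_add_mul_self_le_rpow_one_add (by linarith) hp
  have hts' : (t / τ) * (τ * lam) = t * lam := by field_simp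
  have hkey : ((t - τ) * lam) ^ α ≤ (1 + τ * lam) ^ (t / τ) := by
    rcases le_or_gt ((t - τ) * lam) 1 with h1 | h1
    · calc ((t - τ) * lam) ^ α ≤ 1 ^ α :=
            Real.rpow_le_rpow (by positivity) h1 hα0
        _ = 1 := Real.one_rpow α
        _ ≤ (1 + τ * lam) ^ (t / τ) :=
            Real.one_le_rpow hb.le (by linarith)
    · calc ((t - τ) * lam) ^ α ≤ ((t - τ) * lam) ^ (1:ℝ) :=
            Real.rpow_le_rpow_of_exponent_le h1.le hα1
        _ = (t - τ) * lam := Real.rpow_one _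
        _ ≤ 1 + t * lam := by nlinarith
        _ ≤ (1 + τ * lam) ^ (t / τ) := by rw [← hts']; exact hbern
  have hpos : (0:ℝ) < (1 + τ * lam) ^ (t / τ) := Real.rpow_pos_of_pos (by linarith) _
  rw [← Real.mul_rpow hts.le hlam.le, Real.rpow_neg (by linarith), ← div_eq_mul_inv]
  exact (div_le_one hpos).mpr hkey
end

section
/- For every α ∈ [0,1] and all real numbers t > 0, τ > 0 and λ > 0, one has 1 − (1+τλ)^{−t/τ} ≤ (tλ)^α. -/
/-- Per-eigenvalue increment estimate: for `α ∈ [0,1]`, `t, τ, λ > 0`,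
`1 − (1+τλ)^{−t/τ} ≤ (tλ)^α`. -/
theorem increment_per_eigenvalue (α t τ lam : ℝ) (hα : α ∈ Set.Icc (0:ℝ) 1)
    (ht : 0 < t) (hτ : 0 < τ) (hlam : 0 < lam) :
    1 - (1 + τ * lam) ^ (-(t / τ)) ≤ (t * lam) ^ α := by
  obtain ⟨hα0, hα1⟩ := hα
  have hx : 0 < t * lam := mul_pos ht hlam
  have hb : (0:ℝ) < 1 + τ * lam := by positivity
  have hbpow : (0:ℝ) < (1 + τ * lam) ^ (-(t / τ)) := Real.rpow_pos_of_pos hb _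
  rcases le_or_gt 1 (t * lam) with hge | hlt
  · calc 1 - (1 + τ * lam) ^ (-(t / τ)) ≤ 1 := by linarith
      _ ≤ (t * lam) ^ α := Real.one_le_rpow hge hα0
  · have h1 : 1 - t * lam ≤ (1 + τ * lam) ^ (-(t / τ)) := by
      rw [Real.rpow_def_of_pos hb]
      have hlog : Real.log (1 + τ * lam) ≤ τ * lam := by
        have := Real.log_le_sub_one_of_pos hb
        linarith
      have hlog0 : 0 ≤ Real.log (1 + τ * lam) := Real.log_nonneg (by nlinarith)
      have h2 : Real.log (1 + τ * lam) * (-(t / τ)) + 1 ≤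
          Real.exp (Real.log (1 + τ * lam) * (-(t / τ))) := Real.add_one_le_exp _
      have h3 : 1 - t * lam ≤ Real.log (1 + τ * lam) * (-(t / τ)) + 1 := by
        have h4 : Real.log (1 + τ * lam) * (t / τ) ≤ (τ * lam) * (t / τ) :=
          mul_le_mul_of_nonneg_right hlog (by positivity)
        have h5 : (τ * lam) * (t / τ) = t * lam := by field_simp
        nlinarith
      linarith
    have h6 : t * lam ≤ (t * lam) ^ α := by
      calc t * lam = (t * lam) ^ (1:ℝ) := (Real.rpow_one _).symm
        _ ≤ (t * lam) ^ α := Real.rpow_le_rpow_of_exponent_ge hx hlt.le hα1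
    linarith
end

section
/- Let λ > 0 and τ > 0, and set a = (1+τλ)^{−1}, σ² = τ(2+τλ)/(2(1+τλ)²) and v = 1/(2λ). Then the pushforward of the product measure (gaussian 0 v) ⊗ (gaussian 0 σ²) on ℝ×ℝ under the map (x, ξ) ↦ a·x + ξ equals gaussian 0 v, where gaussian m s denotes the real Gaussian measure with mean m and variance s. -/
set_option maxHeartbeats 1000000

open MeasureTheory ProbabilityTheory Real
open scoped NNReal ENNReal

lemma gaussPDF_conv (v₁ v₂ : ℝ≥0) (h₁ : v₁ ≠ 0) (h₂ : v₂ ≠ 0) (z : ℝ) :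
    ∫ x, gaussianPDFReal 0 v₁ x * gaussianPDFReal 0 v₂ (z - x)
      = gaussianPDFReal 0 (v₁ + v₂) z := by
  have hr₁ : (0:ℝ) < v₁ := lt_of_le_of_ne v₁.coe_nonneg (by exact_mod_cast (Ne.symm h₁))
  have hr₂ : (0:ℝ) < v₂ := lt_of_le_of_ne v₂.coe_nonneg (by exact_mod_cast (Ne.symm h₂))
  set r₁ : ℝ := (v₁ : ℝ) with hr1def
  set r₂ : ℝ := (v₂ : ℝ) with hr2def
  have hs : (0:ℝ) < r₁ + r₂ := by positivity
  set A : ℝ := (r₁ + r₂) / (2 * r₁ * r₂) with hA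
  have hApos : 0 < A := by positivity
  set c : ℝ := r₁ * z / (r₁ + r₂) with hc
  have key : ∀ x : ℝ, gaussianPDFReal 0 v₁ x * gaussianPDFReal 0 v₂ (z - x)
      = ((√(2 * π * r₁))⁻¹ * (√(2 * π * r₂))⁻¹ * rexp (- z^2 / (2 * (r₁ + r₂))))
        * rexp (-A * (x - c)^2) := by
    intro x
    simp only [gaussianPDFReal, sub_zero]
    have hexp : -x ^ 2 / (2 * (v₁:ℝ)) + -(z - x) ^ 2 / (2 * (v₂:ℝ))
        = -z ^ 2 / (2 * (r₁ + r₂)) + -A * (x - c) ^ 2 := by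
      rw [hA, hc]
      field_simp
      ring
    rw [mul_mul_mul_comm, ← Real.exp_add, hexp, Real.exp_add, ← mul_assoc]
  simp_rw [key]
  rw [integral_const_mul, integral_sub_right_eq_self (fun x => rexp (-A * x^2)) c,
    integral_gaussian A]
  rw [gaussianPDFReal, sub_zero]
  push_cast
  rw [show ((v₁:ℝ) + v₂) = r₁ + r₂ from rfl]
  rw [mul_comm _ (√(π / A)), ← mul_assoc]
  congr 1
  rw [← Real.sqrt_inv (2*π*r₁), ← Real.sqrt_inv (2*π*r₂), ← Real.sqrt_inv,
    ← Real.sqrt_mul (by positivity), ← Real.sqrt_mul (by positivity)]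
  congr 1
  rw [hA]
  field_simp

lemma gaussPDF_bound (v : ℝ≥0) (y : ℝ) :
    ‖gaussianPDFReal 0 v y‖ ≤ (√(2 * π * v))⁻¹ := by
  rw [Real.norm_of_nonneg (gaussianPDFReal_nonneg _ _ _), gaussianPDFReal, sub_zero]
  have h1 : rexp (-y ^ 2 / (2 * v)) ≤ 1 := by
    rw [Real.exp_le_one_iff]
    apply div_nonpos_of_nonpos_of_nonneg
    · simp [sq_nonneg]
    · positivity
  calc (√(2 * π * v))⁻¹ * rexp (-y ^ 2 / (2 * v)) ≤ (√(2 * π * v))⁻¹ * 1 := by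
        gcongr
    _ = (√(2 * π * v))⁻¹ := mul_one _

lemma gauss_add (v₁ v₂ : ℝ≥0) (h₁ : v₁ ≠ 0) (h₂ : v₂ ≠ 0) :
    Measure.map (fun p : ℝ × ℝ => p.1 + p.2)
      ((gaussianReal 0 v₁).prod (gaussianReal 0 v₂)) = gaussianReal 0 (v₁ + v₂) := by
  have hmeas : Measurable (fun p : ℝ × ℝ => p.1 + p.2) := measurable_fst.add measurable_snd
  have hker : Measurable (fun p : ℝ × ℝ => gaussianPDF p.1 v₂ p.2) := by
    have h0 : Measurable (fun p : ℝ × ℝ => gaussianPDFReal p.1 v₂ p.2) := by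
      simp only [gaussianPDFReal]
      exact ((((measurable_snd.sub measurable_fst).pow_const 2).neg.div_const _).exp.const_mul _)
    exact h0.ennreal_ofReal
  ext s hs
  rw [Measure.map_apply hmeas hs, gaussianReal_of_var_ne_zero 0 (by simp [h₁] : v₁ + v₂ ≠ 0),
    withDensity_apply _ hs, Measure.prod_apply (hmeas hs)]
  have fiber : ∀ x : ℝ, (Prod.mk x ⁻¹' ((fun p : ℝ × ℝ => p.1 + p.2) ⁻¹' s))
      = (fun y => x + y) ⁻¹' s := fun x => rfl
  simp_rw [fiber]
  have hmap : ∀ x : ℝ, (gaussianReal 0 v₂) ((fun y => x + y) ⁻¹' s)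
      = ∫⁻ z in s, gaussianPDF x v₂ z := by
    intro x
    rw [← Measure.map_apply (measurable_const_add x) hs, gaussianReal_map_const_add,
      zero_add, gaussianReal_of_var_ne_zero _ h₂, withDensity_apply _ hs]
  simp_rw [hmap]
  have hmi : Measurable (fun x => ∫⁻ z in s, gaussianPDF x v₂ z) :=
    by exact Measurable.lintegral_prod_right' (ν := volume.restrict s) hker
  rw [gaussianReal_of_var_ne_zero _ h₁,
    lintegral_withDensity_eq_lintegral_mul _ (measurable_gaussianPDF _ _) hmi]
  have pull : ∀ x : ℝ, gaussianPDF 0 v₁ x * ∫⁻ z in s, gaussianPDF x v₂ z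
      = ∫⁻ z in s, gaussianPDF 0 v₁ x * gaussianPDF x v₂ z := by
    intro x
    rw [lintegral_const_mul _ (measurable_gaussianPDF x v₂)]
  simp only [Pi.mul_apply]
  rw [lintegral_congr pull]
  have hswap : AEMeasurable (Function.uncurry fun a z => gaussianPDF 0 v₁ a * gaussianPDF a v₂ z)
      ((volume : Measure ℝ).prod (volume.restrict s)) := by
    apply Measurable.aemeasurable
    have : (Function.uncurry fun a z => gaussianPDF 0 v₁ a * gaussianPDF a v₂ z)
        = fun p : ℝ × ℝ => gaussianPDF 0 v₁ p.1 * gaussianPDF p.1 v₂ p.2 := rfl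
    rw [this]
    exact ((measurable_gaussianPDF 0 v₁).comp measurable_fst).mul hker
  rw [lintegral_lintegral_swap hswap]
  refine setLIntegral_congr_fun hs (fun z _ => ?_)
  have hshift : ∀ x : ℝ, gaussianPDF x v₂ z = gaussianPDF 0 v₂ (z - x) := by
    intro x
    simp [gaussianPDF, gaussianPDFReal]
  simp_rw [hshift, gaussianPDF]
  have hnn : ∀ x : ℝ, 0 ≤ gaussianPDFReal 0 v₁ x * gaussianPDFReal 0 v₂ (z - x) :=
    fun x => mul_nonneg (gaussianPDFReal_nonneg _ _ _) (gaussianPDFReal_nonneg _ _ _)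
  have hint : Integrable (fun x => gaussianPDFReal 0 v₂ (z - x) * gaussianPDFReal 0 v₁ x) := by
    refine (integrable_gaussianPDFReal 0 v₁).bdd_mul ?_ (c := (√(2 * π * v₂))⁻¹) (ae_of_all _ fun x => gaussPDF_bound v₂ (z - x))
    exact ((measurable_gaussianPDFReal 0 v₂).comp (measurable_const.sub measurable_id)).aestronglyMeasurable
  calc ∫⁻ x, ENNReal.ofReal (gaussianPDFReal 0 v₁ x) * ENNReal.ofReal (gaussianPDFReal 0 v₂ (z - x))
      = ∫⁻ x, ENNReal.ofReal (gaussianPDFReal 0 v₂ (z - x) * gaussianPDFReal 0 v₁ x) := by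
        refine lintegral_congr fun x => ?_
        rw [← ENNReal.ofReal_mul (gaussianPDFReal_nonneg 0 v₁ x), mul_comm]
    _ = ENNReal.ofReal (∫ x, gaussianPDFReal 0 v₂ (z - x) * gaussianPDFReal 0 v₁ x) :=
        (ofReal_integral_eq_lintegral_ofReal hint (ae_of_all _ fun x => mul_nonneg (gaussianPDFReal_nonneg _ _ _) (gaussianPDFReal_nonneg _ _ _))).symm
    _ = ENNReal.ofReal (gaussianPDFReal 0 (v₁ + v₂) z) := by
        rw [← gaussPDF_conv v₁ v₂ h₁ h₂ z]
        congr 1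
        exact integral_congr_ae (ae_of_all _ fun x => mul_comm _ _)

/-- One Fourier mode of the preservation of the Gaussian invariant distribution by the
modified Euler scheme: with `a = (1+τλ)⁻¹`, `σ² = τ(2+τλ)/(2(1+τλ)²)` and `v = 1/(2λ)`,
the pushforward of `N(0,v) ⊗ N(0,σ²)` under `(x, ξ) ↦ a·x + ξ` is `N(0,v)`. -/
theorem modified_euler_preserves_gaussian (lam τ : ℝ) (hlam : 0 < lam) (hτ : 0 < τ) :
    Measure.map (fun p : ℝ × ℝ => (1 + τ * lam)⁻¹ * p.1 + p.2)
        ((gaussianReal 0 (1 / (2 * lam)).toNNReal).prod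
          (gaussianReal 0 (τ * (2 + τ * lam) / (2 * (1 + τ * lam) ^ 2)).toNNReal))
      = gaussianReal 0 (1 / (2 * lam)).toNNReal := by
  have h1 : (0:ℝ) < 1 + τ * lam := by positivity
  set a : ℝ := (1 + τ * lam)⁻¹ with ha
  have hapos : 0 < a := by positivity
  have hvpos : (0:ℝ) < 1 / (2 * lam) := by positivity
  have hwpos : (0:ℝ) < τ * (2 + τ * lam) / (2 * (1 + τ * lam) ^ 2) := by positivity
  set v : ℝ≥0 := (1 / (2 * lam)).toNNReal with hv
  set w : ℝ≥0 := (τ * (2 + τ * lam) / (2 * (1 + τ * lam) ^ 2)).toNNReal with hw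
  have hvne : v ≠ 0 := by
    simp only [hv, ne_eq, Real.toNNReal_eq_zero, not_le]
    exact hvpos
  have hwne : w ≠ 0 := by
    simp only [hw, ne_eq, Real.toNNReal_eq_zero, not_le]
    exact hwpos
  have hane : (⟨a ^ 2, sq_nonneg a⟩ : ℝ≥0) ≠ 0 := by
    intro h
    exact (pow_pos hapos 2).ne' (congrArg Subtype.val h)
  have hcomp : (fun p : ℝ × ℝ => a * p.1 + p.2)
      = (fun p : ℝ × ℝ => p.1 + p.2) ∘ Prod.map (fun x => a * x) id := rfl
  rw [hcomp, ← Measure.map_map (show Measurable (fun p : ℝ × ℝ => p.1 + p.2) from measurable_fst.add measurable_snd)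
    (Measurable.prodMap (measurable_const_mul a) measurable_id),
    ← Measure.map_prod_map _ _ (measurable_const_mul a) measurable_id,
    Measure.map_id, gaussianReal_map_const_mul a, mul_zero,
    gauss_add _ _ (mul_ne_zero (a := NNReal.mk (a ^ 2) (sq_nonneg a)) hane hvne) hwne]
  congr 1
  apply NNReal.coe_injective
  simp only [NNReal.coe_add, NNReal.coe_mul, NNReal.coe_mk]
  rw [hv, hw, Real.coe_toNNReal _ hvpos.le, Real.coe_toNNReal _ hwpos.le, ha]
  field_simp
  ring
end

section
/- Let λ > 0 and τ > 0, and set v = 1/(2λ(1+τλ/2)). Then the pushforward of the product measure (gaussian 0 v) ⊗ (gaussian 0 τ) on ℝ×ℝ under the map (x, ξ) ↦ (1+τλ)^{−1}(x + ξ) equals gaussian 0 v, where gaussian m s denotes the real Gaussian measure with mean m and variance s. -/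
open MeasureTheory ProbabilityTheory Real
open scoped NNReal ENNReal

/-- Convolution identity for Gaussian pdfs. -/
lemma gaussianPDFReal_conv (a b : ℝ≥0) (ha : a ≠ 0) (hb : b ≠ 0) (z : ℝ) :
    ∫ x, gaussianPDFReal 0 a x * gaussianPDFReal 0 b (z - x) =
      gaussianPDFReal 0 (a + b) z := by
  have hA : 0 < (a : ℝ) := by exact_mod_cast pos_iff_ne_zero.mpr ha
  have hB : 0 < (b : ℝ) := by exact_mod_cast pos_iff_ne_zero.mpr hb
  have hAB : 0 < (a : ℝ) + (b : ℝ) := by positivity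
  have hexp : ∀ x : ℝ, rexp (-x ^ 2 / (2 * (a : ℝ))) * rexp (-(z - x) ^ 2 / (2 * (b : ℝ)))
      = rexp (-z ^ 2 / (2 * ((a : ℝ) + (b : ℝ)))) *
        rexp (-((((a : ℝ) + (b : ℝ)) / (2 * (a : ℝ) * (b : ℝ)))
          * (x - (a : ℝ) * z / ((a : ℝ) + (b : ℝ))) ^ 2)) := by
    intro x
    rw [← Real.exp_add, ← Real.exp_add, Real.exp_eq_exp]
    field_simp
    ring
  have key : (fun x : ℝ => gaussianPDFReal 0 a x * gaussianPDFReal 0 b (z - x))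
      = fun x => ((√(2 * π * (a : ℝ)))⁻¹ * (√(2 * π * (b : ℝ)))⁻¹ *
          rexp (-z ^ 2 / (2 * ((a : ℝ) + (b : ℝ))))) *
        rexp (-((((a : ℝ) + (b : ℝ)) / (2 * (a : ℝ) * (b : ℝ)))
          * (x - (a : ℝ) * z / ((a : ℝ) + (b : ℝ))) ^ 2)) := by
    funext x
    simp only [gaussianPDFReal, sub_zero]
    rw [mul_mul_mul_comm, hexp x]
    ring
  rw [key, integral_const_mul,
    integral_sub_right_eq_self
      (fun x => rexp (-((((a : ℝ) + (b : ℝ)) / (2 * (a : ℝ) * (b : ℝ))) * x ^ 2)))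
      ((a : ℝ) * z / ((a : ℝ) + (b : ℝ)))]
  simp_rw [neg_mul_eq_neg_mul]
  rw [integral_gaussian]
  simp only [gaussianPDFReal, sub_zero]
  have hcoe : ((a + b : ℝ≥0) : ℝ) = (a : ℝ) + (b : ℝ) := by push_cast; ring
  rw [hcoe]
  have hconst : (√(2 * π * (a : ℝ)))⁻¹ * (√(2 * π * (b : ℝ)))⁻¹ *
      √(π / (((a : ℝ) + (b : ℝ)) / (2 * (a : ℝ) * (b : ℝ))))
      = (√(2 * π * ((a : ℝ) + (b : ℝ))))⁻¹ := by
    rw [← Real.sqrt_inv, ← Real.sqrt_inv, ← Real.sqrt_inv, ← Real.sqrt_mul (by positivity),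
      ← Real.sqrt_mul (by positivity)]
    congr 1
    field_simp
  rw [mul_assoc, mul_comm (rexp _), ← mul_assoc, hconst]

lemma measurable_pdf_pair (b : ℝ≥0) :
    Measurable (fun p : ℝ × ℝ => gaussianPDF p.1 b p.2) := by
  simp only [gaussianPDF, gaussianPDFReal]
  fun_prop

/-- Convolution of two centered Gaussians. -/
lemma gaussianReal_conv (a b : ℝ≥0) (ha : a ≠ 0) (hb : b ≠ 0) :
    Measure.map (fun p : ℝ × ℝ => p.1 + p.2)
      ((gaussianReal 0 a).prod (gaussianReal 0 b)) = gaussianReal 0 (a + b) := by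
  have hab : a + b ≠ 0 := by simp [ha]
  have hmadd : Measurable (fun p : ℝ × ℝ => p.1 + p.2) :=
    measurable_fst.add measurable_snd
  ext s hs
  rw [Measure.map_apply hmadd hs, Measure.prod_apply (hmadd hs)]
  have hinner : ∀ x : ℝ, gaussianReal 0 b (Prod.mk x ⁻¹' ((fun p : ℝ × ℝ => p.1 + p.2) ⁻¹' s))
      = ∫⁻ y in s, gaussianPDF x b y := by
    intro x
    have h' : (Prod.mk x ⁻¹' ((fun p : ℝ × ℝ => p.1 + p.2) ⁻¹' s)) = (fun y => x + y) ⁻¹' s := rfl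
    rw [h', ← Measure.map_apply (measurable_const_add x) hs, gaussianReal_map_const_add,
      zero_add, gaussianReal_apply _ hb s]
  simp_rw [hinner]
  rw [gaussianReal_of_var_ne_zero _ ha,
    lintegral_withDensity_eq_lintegral_mul _ (measurable_gaussianPDF 0 a)
      ((measurable_pdf_pair b).lintegral_prod_right')]
  simp only [Pi.mul_apply]
  have hswap : ∫⁻ x, gaussianPDF 0 a x * ∫⁻ y in s, gaussianPDF x b y
      = ∫⁻ y in s, ∫⁻ x, gaussianPDF 0 a x * gaussianPDF x b y := by
    have h1 : ∀ x : ℝ, gaussianPDF 0 a x * ∫⁻ y in s, gaussianPDF x b y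
        = ∫⁻ y in s, gaussianPDF 0 a x * gaussianPDF x b y := fun x =>
      (lintegral_const_mul _ ((measurable_pdf_pair b).comp measurable_prodMk_left)).symm
    rw [lintegral_congr h1]
    exact lintegral_lintegral_swap
      (((measurable_gaussianPDF 0 a).comp measurable_fst).mul (measurable_pdf_pair b)).aemeasurable
  rw [hswap, gaussianReal_apply _ hab s]
  refine setLIntegral_congr_fun hs (fun y _ => ?_)
  have hBpos : 0 < (b : ℝ) := by exact_mod_cast pos_iff_ne_zero.mpr hb
  have hbdd : ∀ x : ℝ, ‖gaussianPDFReal x b y‖ ≤ (√(2 * π * (b : ℝ)))⁻¹ := by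
    intro x
    rw [Real.norm_of_nonneg (gaussianPDFReal_nonneg _ _ _), gaussianPDFReal]
    have hle : rexp (-(y - x) ^ 2 / (2 * (b : ℝ))) ≤ 1 := by
      rw [Real.exp_le_one_iff]
      apply div_nonpos_of_nonpos_of_nonneg
      · exact neg_nonpos.mpr (sq_nonneg _)
      · positivity
    calc (√(2 * π * (b : ℝ)))⁻¹ * rexp (-(y - x) ^ 2 / (2 * (b : ℝ)))
        ≤ (√(2 * π * (b : ℝ)))⁻¹ * 1 := by gcongr
      _ = _ := mul_one _
  have hmb : Measurable (fun x => gaussianPDFReal x b y) := by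
    simp only [gaussianPDFReal]
    fun_prop
  have hint : Integrable (fun x => gaussianPDFReal 0 a x * gaussianPDFReal x b y) := by
    have := (integrable_gaussianPDFReal 0 a).bdd_mul
      (f := fun x => gaussianPDFReal x b y)
      hmb.aestronglyMeasurable
      (ae_of_all _ hbdd)
    simpa [mul_comm] using this
  have hconv : ∫ x, gaussianPDFReal 0 a x * gaussianPDFReal x b y
      = gaussianPDFReal 0 (a + b) y := by
    rw [← gaussianPDFReal_conv a b ha hb y]
    congr 1
    funext x
    rw [gaussianPDFReal_sub, zero_add]
  calc ∫⁻ x, gaussianPDF 0 a x * gaussianPDF x b y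
      = ∫⁻ x, ENNReal.ofReal (gaussianPDFReal 0 a x * gaussianPDFReal x b y) := by
        simp_rw [gaussianPDF,
          ENNReal.ofReal_mul (gaussianPDFReal_nonneg 0 a _)]
    _ = ENNReal.ofReal (∫ x, gaussianPDFReal 0 a x * gaussianPDFReal x b y) := by
        rw [← ofReal_integral_eq_lintegral_ofReal hint
          (ae_of_all _ fun x => mul_nonneg (gaussianPDFReal_nonneg _ _ _)
            (gaussianPDFReal_nonneg _ _ _))]
    _ = gaussianPDF 0 (a + b) y := by rw [hconv]; rfl

/-- One Fourier mode of the invariant Gaussian distribution of the standard Euler scheme: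
with `v = 1/(2λ(1+τλ/2))`, the pushforward of `N(0,v) ⊗ N(0,τ)` under
`(x, ξ) ↦ (1+τλ)⁻¹ (x+ξ)` is `N(0,v)`. -/
theorem standard_euler_invariant_gaussian (lam τ : ℝ) (hlam : 0 < lam) (hτ : 0 < τ) :
    Measure.map (fun p : ℝ × ℝ => (1 + τ * lam)⁻¹ * (p.1 + p.2))
        ((gaussianReal 0 (1 / (2 * lam * (1 + τ * lam / 2))).toNNReal).prod
          (gaussianReal 0 τ.toNNReal))
      = gaussianReal 0 (1 / (2 * lam * (1 + τ * lam / 2))).toNNReal := by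
  have h1 : 0 < 1 + τ * lam := by positivity
  have h2 : 0 < 1 + τ * lam / 2 := by positivity
  have hvpos : 0 < 1 / (2 * lam * (1 + τ * lam / 2)) := by positivity
  have hv : (1 / (2 * lam * (1 + τ * lam / 2))).toNNReal ≠ 0 :=
    (Real.toNNReal_pos.mpr hvpos).ne'
  have hτ' : τ.toNNReal ≠ 0 := (Real.toNNReal_pos.mpr hτ).ne'
  have hcomp : (fun p : ℝ × ℝ => (1 + τ * lam)⁻¹ * (p.1 + p.2))
      = (fun x : ℝ => (1 + τ * lam)⁻¹ * x) ∘ (fun p : ℝ × ℝ => p.1 + p.2) := rfl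
  rw [hcomp, ← Measure.map_map (f := fun p : ℝ × ℝ => p.1 + p.2) (measurable_const_mul _)
      (measurable_fst.add measurable_snd),
    gaussianReal_conv _ _ hv hτ', gaussianReal_map_const_mul]
  rw [mul_zero]
  congr 1
  ext
  push_cast
  rw [Real.coe_toNNReal _ hvpos.le, Real.coe_toNNReal _ hτ.le]
  field_simp
  ring
end

section
/- For all real numbers λ > 0 and s > 0, one has (√(s(2+λs)/2)/(1+λs) − 1/√(2λ))² ≤ 1/(2λ(1+λs)⁴). -/
/-- Per-mode estimate for the asymptotic preserving scheme:
`(√(s(2+λs)/2)/(1+λs) − 1/√(2λ))² ≤ 1/(2λ(1+λs)⁴)` for `λ, s > 0`. -/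
theorem AP_per_mode_estimate (lam s : ℝ) (hlam : 0 < lam) (hs : 0 < s) :
    (Real.sqrt (s * (2 + lam * s) / 2) / (1 + lam * s) - 1 / Real.sqrt (2 * lam)) ^ 2 ≤
      1 / (2 * lam * (1 + lam * s) ^ 4) := by
  set a : ℝ := 1 + lam * s with ha
  have ha1 : 1 < a := by nlinarith
  have ha0 : 0 < a := by linarith
  have hA : (0:ℝ) ≤ a ^ 2 - 1 := by nlinarith
  set r : ℝ := Real.sqrt (a ^ 2 - 1) with hr
  have hr0 : 0 ≤ r := Real.sqrt_nonneg _
  have hrsq : r ^ 2 = a ^ 2 - 1 := Real.sq_sqrt hA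
  have hra : r ≤ a := by
    nlinarith [hrsq]
  have hkey : a - 1 / a ≤ r := by
    have heq : a - 1 / a = (a ^ 2 - 1) / a := by field_simp
    rw [heq, div_le_iff₀ ha0]
    nlinarith [mul_nonneg hr0 (sub_nonneg.mpr hra)]
  set t : ℝ := Real.sqrt (2 * lam) with ht
  have ht0 : 0 < t := Real.sqrt_pos.mpr (by linarith)
  have htsq : t ^ 2 = 2 * lam := Real.sq_sqrt (by linarith)
  have hrewrite : Real.sqrt (s * (2 + lam * s) / 2) = r / t := by
    rw [hr, ht, ← Real.sqrt_div hA]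
    congr 1
    field_simp
    ring
  rw [hrewrite]
  have hLHS : (r / t / a - 1 / t) ^ 2 = (a - r) ^ 2 / (t ^ 2 * a ^ 2) := by
    field_simp
    ring
  rw [hLHS]
  have h2 : (a - r) ^ 2 ≤ (1 / a) ^ 2 := by
    have h3 : a - r ≤ 1 / a := by linarith
    have h4 : 0 ≤ a - r := by linarith
    exact pow_le_pow_left₀ h4 h3 2
  have h5 : (a - r) ^ 2 / (t ^ 2 * a ^ 2) ≤ (1 / a) ^ 2 / (t ^ 2 * a ^ 2) := by
    gcongr
  calc (a - r) ^ 2 / (t ^ 2 * a ^ 2) ≤ (1 / a) ^ 2 / (t ^ 2 * a ^ 2) := h5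
    _ = 1 / (2 * lam * a ^ 4) := by rw [htsq]; field_simp
end

section
/- Let (λ_j)_{j≥0} be a sequence of positive real numbers with Σ_j 1/λ_j < ∞, and let τ > 0. Then Σ_j (√((τ/ε)(2+λ_jτ/ε)/2)/(1+λ_jτ/ε) − 1/√(2λ_j))² tends to 0 as ε tends to 0 from the right. -/
open Filter Real

private theorem AP_core (l : ℝ) (hl : 0 < l) :
    Tendsto (fun s : ℝ => Real.sqrt (s * (2 + l * s) / 2) / (1 + l * s)) atTop
      (nhds (1 / Real.sqrt (2 * l))) := by
  have h1 : Tendsto (fun u : ℝ => (2 * u + l) / (2 * (u + l) ^ 2)) (nhds 0)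
      (nhds (1 / (2 * l))) := by
    have hc : ContinuousAt (fun u : ℝ => (2 * u + l) / (2 * (u + l) ^ 2)) 0 :=
      ContinuousAt.div (by fun_prop) (by fun_prop) (by positivity)
    rw [show (1:ℝ)/(2*l) = l/(2*l^2) by field_simp]
    simpa [ContinuousAt] using hc
  have hg : Tendsto (fun u : ℝ => Real.sqrt ((2 * u + l) / (2 * (u + l) ^ 2))) (nhds 0)
      (nhds (1 / Real.sqrt (2 * l))) := by
    have := Real.continuous_sqrt.continuousAt.tendsto.comp h1
    simpa [Function.comp_def, Real.sqrt_div', one_div, Real.sqrt_inv] using this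
  have hinv : Tendsto (fun s : ℝ => s⁻¹) atTop (nhds (0:ℝ)) := tendsto_inv_atTop_zero
  apply (hg.comp hinv).congr'
  filter_upwards [eventually_gt_atTop (0:ℝ)] with s hs
  have h1s : 0 < 1 + l * s := by positivity
  have key : (2 * s⁻¹ + l) / (2 * (s⁻¹ + l) ^ 2) = s * (2 + l * s) / 2 / (1 + l * s) ^ 2 := by
    field_simp
  simp only [Function.comp, key]
  rw [Real.sqrt_div (by positivity), Real.sqrt_sq h1s.le]

/-- Hilbert–Schmidt convergence identifying the limiting scheme of the asymptotic
preserving discretization: if `λ_j > 0` with `Σ_j 1/λ_j < ∞` and `τ > 0`, then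
`Σ_j (√((τ/ε)(2+λ_j τ/ε)/2)/(1+λ_j τ/ε) − 1/√(2λ_j))² → 0` as `ε → 0⁺`. -/
theorem AP_HilbertSchmidt_convergence (lam : ℕ → ℝ) (hpos : ∀ j, 0 < lam j)
    (hsum : Summable fun j => 1 / lam j) (τ : ℝ) (hτ : 0 < τ) :
    Filter.Tendsto
      (fun ε : ℝ => ∑' j,
        (Real.sqrt ((τ / ε) * (2 + lam j * (τ / ε)) / 2) / (1 + lam j * (τ / ε)) -
          1 / Real.sqrt (2 * lam j)) ^ 2)
      (nhdsWithin 0 (Set.Ioi 0)) (nhds 0) := by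
  have hbd : Summable fun j => 1 / (2 * lam j) := by
    refine (hsum.div_const 2).congr fun j => ?_
    rw [div_div, mul_comm]
  have hτε : Tendsto (fun ε : ℝ => τ / ε) (nhdsWithin 0 (Set.Ioi 0)) atTop := by
    simp only [div_eq_mul_inv]
    exact Tendsto.const_mul_atTop hτ tendsto_inv_nhdsGT_zero
  have hab : ∀ j : ℕ, Tendsto (fun ε : ℝ =>
      (Real.sqrt ((τ / ε) * (2 + lam j * (τ / ε)) / 2) / (1 + lam j * (τ / ε)) -
        1 / Real.sqrt (2 * lam j)) ^ 2) (nhdsWithin 0 (Set.Ioi 0)) (nhds (0:ℝ)) := by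
    intro j
    have hF := (AP_core (lam j) (hpos j)).comp hτε
    have := (hF.sub (tendsto_const_nhds (x := 1 / Real.sqrt (2 * lam j)))).pow 2
    simpa [Function.comp] using this
  have hb : ∀ᶠ ε in nhdsWithin (0:ℝ) (Set.Ioi 0), ∀ j : ℕ,
      ‖(Real.sqrt ((τ / ε) * (2 + lam j * (τ / ε)) / 2) / (1 + lam j * (τ / ε)) -
        1 / Real.sqrt (2 * lam j)) ^ 2‖ ≤ 1 / (2 * lam j) := by
    filter_upwards [self_mem_nhdsWithin] with ε (hε : 0 < ε)
    intro j
    set l := lam j with hl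
    have hlp : 0 < l := hpos j
    set s := τ / ε with hs
    have hsp : 0 < s := div_pos hτ hε
    have h1s : 0 < 1 + l * s := by positivity
    set c := 1 / Real.sqrt (2 * l) with hc
    have hcp : 0 < c := by positivity
    have hFn : 0 ≤ Real.sqrt (s * (2 + l * s) / 2) / (1 + l * s) := by positivity
    have hFle : Real.sqrt (s * (2 + l * s) / 2) / (1 + l * s) ≤ c := by
      rw [div_le_iff₀ h1s]
      have h1 : s * (2 + l * s) / 2 ≤ (1 + l * s) ^ 2 / (2 * l) := by
        rw [div_le_div_iff₀ (by norm_num) (by positivity)]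
        nlinarith
      calc Real.sqrt (s * (2 + l * s) / 2) ≤ Real.sqrt ((1 + l * s) ^ 2 / (2 * l)) :=
            Real.sqrt_le_sqrt h1
        _ = (1 + l * s) / Real.sqrt (2 * l) := by
            rw [Real.sqrt_div (by positivity), Real.sqrt_sq h1s.le]
        _ = c * (1 + l * s) := by rw [hc]; ring
    have hc2 : c ^ 2 = 1 / (2 * l) := by
      rw [hc, div_pow, one_pow, Real.sq_sqrt (by positivity)]
    rw [Real.norm_eq_abs, abs_of_nonneg (sq_nonneg _), ← hc2]
    exact sq_le_sq' (by linarith) (by linarith)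
  simpa using tendsto_tsum_of_dominated_convergence hbd hab hb
end
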